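/- Integral estimate for the radial derivative of Ã at small r: setting Ãᵣ(r,y) := −4 sin²(ry)/r³ + 2 y sin(2ry)/r², there exists a constant C > 0 such that for all r ∈ (0,1] and all v ≥ 0, ∫₀^v Ã(r,y)^{1/2} |Ãᵣ(r,y)| dy ≤ C r (v⁵ + v⁶). -/

import Mathlib

open Real Set

/-- `Ã(r,y) = 1 + 2 sin²(ry) / r²`. -/
noncomputable def Atil (r y : ℝ) : ℝ := 1 + 2 * Real.sin (r * y) ^ 2 / r ^ 2

/-- `Ãᵣ(r,y)`, the partial derivative of `Ã(r,y)` with respect to `r` at fixed `y`. -/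
noncomputable def AtilR (r y : ℝ) : ℝ :=
  -4 * Real.sin (r * y) ^ 2 / r ^ 3 + 2 * y * Real.sin (2 * r * y) / r ^ 2

lemma g_bound (s : ℝ) :
    |s * Real.sin (2 * s) - 1 + Real.cos (2 * s)| ≤ 40 * s ^ 4 := by
  rcases le_or_gt |s| (1/2) with h | h
  · have h2 : |2 * s| ≤ 1 := by rw [abs_mul]; rw [abs_two]; linarith
    have hs : |Real.sin (2 * s) - (2 * s - (2 * s) ^ 3 / 6)| ≤ |2 * s| ^ 4 * (5 / 96) :=
      (Real.sin_bound h2).trans (by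
        have h4 := pow_nonneg (abs_nonneg (2 * s)) 4
        rw [pow_succ]; nlinarith [abs_nonneg (2 * s), mul_nonneg h4 (sub_nonneg.2 h2)])
    have hc := Real.cos_bound h2
    have habs : |2 * s| ^ 4 = 16 * s ^ 4 := by
      rw [abs_mul, abs_two, mul_pow, ← abs_pow]
      have : |s ^ 4| = s ^ 4 := abs_of_nonneg (by positivity)
      rw [this]; ring
    rw [habs] at hs hc
    rw [abs_le] at hs hc ⊢
    have hs2 : s ^ 2 ≤ 1/4 := by
      have := sq_abs s
      nlinarith [sq_nonneg s, abs_nonneg s]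
    have h4 : s ^ 4 = (s ^ 2) ^ 2 := by ring
    constructor
    · nlinarith [sq_nonneg s, sq_nonneg (s^2), sq_abs s, abs_nonneg s,
        neg_abs_le s, le_abs_self s]
    · nlinarith [sq_nonneg s, sq_nonneg (s^2), sq_abs s, abs_nonneg s,
        neg_abs_le s, le_abs_self s]
  · have h1 : |s * Real.sin (2 * s) - 1 + Real.cos (2 * s)| ≤ |s| + 2 := by
      calc |s * Real.sin (2 * s) - 1 + Real.cos (2 * s)|
          ≤ |s * Real.sin (2 * s)| + |Real.cos (2 * s) - 1| := by
            have := abs_add_le (s * Real.sin (2 * s)) (Real.cos (2 * s) - 1)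
            have e : s * Real.sin (2 * s) - 1 + Real.cos (2 * s)
                = s * Real.sin (2 * s) + (Real.cos (2 * s) - 1) := by ring
            rw [e]; exact this
        _ ≤ |s| + 2 := by
            have hb : |s * Real.sin (2 * s)| ≤ |s| := by
              rw [abs_mul]
              nlinarith [Real.abs_sin_le_one (2 * s), abs_nonneg s]
            have hcb : |Real.cos (2 * s) - 1| ≤ 2 := by
              have := Real.abs_cos_le_one (2 * s)
              rw [abs_le] at this ⊢; constructor <;> linarith [this.1, this.2]
            linarith
    have hs4 : 40 * s ^ 4 ≥ |s| + 2 := by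
      have h2 : (1/2 : ℝ) < |s| := h
      have hsq : s ^ 2 = |s| ^ 2 := (sq_abs s).symm
      have h4 : s ^ 4 = |s| ^ 4 := by rw [show s ^ 4 = (s^2)^2 by ring, hsq]; ring
      rw [h4]
      nlinarith [abs_nonneg s, sq_nonneg (|s| - 1/2), sq_nonneg (|s|^2 - 1/4), sq_nonneg |s|]
    linarith

lemma AtilR_eq (r y : ℝ) (hr : r ≠ 0) :
    AtilR r y = 2 / r ^ 3 *
      (r * y * Real.sin (2 * (r * y)) - 1 + Real.cos (2 * (r * y))) := by
  have hsin : Real.sin (r * y) ^ 2 = 1/2 - Real.cos (2 * (r * y)) / 2 := by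
    have := Real.cos_sq (r * y)
    have hpyth := Real.sin_sq_add_cos_sq (r * y)
    linarith
  unfold AtilR
  rw [hsin]
  have h2 : (2 : ℝ) * r * y = 2 * (r * y) := by ring
  rw [h2]
  field_simp
  ring

lemma AtilR_abs_le (r y : ℝ) (hr : 0 < r) :
    |AtilR r y| ≤ 80 * r * y ^ 4 := by
  rw [AtilR_eq r y hr.ne']
  rw [abs_mul]
  have h1 : |2 / r ^ 3| = 2 / r ^ 3 := abs_of_nonneg (by positivity)
  rw [h1]
  have h2 := g_bound (r * y)
  calc 2 / r ^ 3 * |r * y * Real.sin (2 * (r * y)) - 1 + Real.cos (2 * (r * y))|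
      ≤ 2 / r ^ 3 * (40 * (r * y) ^ 4) := by
        apply mul_le_mul_of_nonneg_left h2 (by positivity)
    _ = 80 * r * y ^ 4 := by field_simp; ring

/-- Integral estimate for the radial derivative of `Ã` at small `r`. -/
theorem integral_estimate_AtilR :
    ∃ C : ℝ, 0 < C ∧
      ∀ r ∈ Set.Ioc (0:ℝ) 1, ∀ v : ℝ, 0 ≤ v →
        (∫ y in (0:ℝ)..v, (Atil r y) ^ ((1:ℝ)/2) * |AtilR r y|)
          ≤ C * r * (v ^ 5 + v ^ 6) := by
  refine ⟨80, by norm_num, ?_⟩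
  rintro r ⟨hr, hr1⟩ v hv
  -- pointwise bound
  have hptwise : ∀ y ∈ Set.Icc (0:ℝ) v,
      (Atil r y) ^ ((1:ℝ)/2) * |AtilR r y| ≤ 80 * r * (y ^ 4 + 2 * y ^ 5) := by
    intro y hy
    have hy0 : 0 ≤ y := hy.1
    have hA0 : 0 ≤ Atil r y := by
      unfold Atil; positivity
    have hAle : Atil r y ≤ (1 + 2 * y) ^ 2 := by
      have hsin : Real.sin (r * y) ^ 2 ≤ (r * y) ^ 2 := Real.sin_sq_le_sq
      have : Atil r y ≤ 1 + 2 * y ^ 2 := by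
        unfold Atil
        have : 2 * Real.sin (r * y) ^ 2 / r ^ 2 ≤ 2 * y ^ 2 := by
          rw [div_le_iff₀ (by positivity)]
          nlinarith
        linarith
      nlinarith
    have hrpow : (Atil r y) ^ ((1:ℝ)/2) ≤ 1 + 2 * y := by
      rw [← Real.sqrt_eq_rpow]
      calc Real.sqrt (Atil r y) ≤ Real.sqrt ((1 + 2 * y) ^ 2) :=
            Real.sqrt_le_sqrt hAle
        _ = |1 + 2 * y| := Real.sqrt_sq_eq_abs _
        _ = 1 + 2 * y := abs_of_nonneg (by linarith)
    have hAR := AtilR_abs_le r y hr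
    calc (Atil r y) ^ ((1:ℝ)/2) * |AtilR r y|
        ≤ (1 + 2 * y) * (80 * r * y ^ 4) := by
          apply mul_le_mul hrpow hAR (abs_nonneg _)
          linarith
      _ = 80 * r * (y ^ 4 + 2 * y ^ 5) := by ring
  -- continuity / integrability
  have hcont : Continuous fun y => (Atil r y) ^ ((1:ℝ)/2) * |AtilR r y| := by
    have hA : Continuous fun y => Atil r y := by
      unfold Atil; fun_prop
    have hAR : Continuous fun y => AtilR r y := by
      unfold AtilR; fun_prop
    have h1 : Continuous fun y => (Atil r y) ^ ((1:ℝ)/2) := by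
      apply hA.rpow_const
      intro x
      right; norm_num
    exact h1.mul hAR.abs
  have hint1 : IntervalIntegrable (fun y => (Atil r y) ^ ((1:ℝ)/2) * |AtilR r y|)
      MeasureTheory.volume 0 v := hcont.intervalIntegrable 0 v
  have hint2 : IntervalIntegrable (fun y => 80 * r * (y ^ 4 + 2 * y ^ 5))
      MeasureTheory.volume 0 v := (by fun_prop : Continuous fun y : ℝ => 80 * r * (y ^ 4 + 2 * y ^ 5)).intervalIntegrable 0 v
  calc (∫ y in (0:ℝ)..v, (Atil r y) ^ ((1:ℝ)/2) * |AtilR r y|)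
      ≤ ∫ y in (0:ℝ)..v, 80 * r * (y ^ 4 + 2 * y ^ 5) := by
        apply intervalIntegral.integral_mono_on hv hint1 hint2 hptwise
    _ = 80 * r * (v ^ 5 / 5 + 2 * (v ^ 6 / 6)) := by
        rw [intervalIntegral.integral_const_mul]
        rw [intervalIntegral.integral_add
          ((by fun_prop : Continuous fun y : ℝ => y ^ 4).intervalIntegrable 0 v)
          ((by fun_prop : Continuous fun y : ℝ => 2 * y ^ 5).intervalIntegrable 0 v)]
        rw [intervalIntegral.integral_const_mul]
        simp [integral_pow]
        left; norm_num
    _ ≤ 80 * r * (v ^ 5 + v ^ 6) := by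
        apply mul_le_mul_of_nonneg_left _ (by positivity)
        nlinarith [pow_nonneg hv 5, pow_nonneg hv 6]
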